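/- Let b = p_1^{α_1}⋯p_k^{α_k} ≥ 2 be the prime factorization of b, and let D be a set of exactly b nonnegative integers satisfying the Kenyon condition with respect to b. Then for each j ∈ {1,…,k} and each ℓ with 0 ≤ ℓ ≤ α_j−1 there exists a unique integer a_{j,ℓ} ≥ 1 with a_{j,ℓ} ≡ ℓ (mod α_j) such that Φ_{p_j^{a_{j,ℓ}}}(X) divides P_D(X); moreover the prime-power spectrum of D is exactly S_D = {p_j^{a_{j,ℓ}} : 1 ≤ j ≤ k, 0 ≤ ℓ ≤ α_j−1}, where for each j the set {a_{j,0},…,a_{j,α_j−1}} is a complete residue system modulo α_j. -/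

import Mathlib

open Polynomial

/-- The mask polynomial `P_A(X) = ∑_{a ∈ A} X^a ∈ ℤ[X]` of a finite set of naturals. -/
noncomputable def mask (A : Finset ℕ) : Polynomial ℤ := ∑ a ∈ A, X ^ a

/-- The Kenyon condition with respect to `b`. -/
def Kenyon (b : ℕ) (D : Finset ℕ) : Prop :=
  ∀ m : ℕ, 1 ≤ m → ∃ k : ℕ, 1 ≤ k ∧
    Polynomial.aeval (Complex.exp (2 * Real.pi * Complex.I * (m : ℂ) / (b : ℂ) ^ k)) (mask D) = 0

lemma mask_eval_one (D : Finset ℕ) : (mask D).eval 1 = (D.card : ℤ) := by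
  simp [mask, eval_finset_sum]

lemma mask_ne_zero {D : Finset ℕ} (hD : D.Nonempty) : mask D ≠ 0 := by
  intro h
  have := mask_eval_one D
  rw [h] at this
  simp at this
  exact hD.card_pos.ne (by exact_mod_cast this)

lemma root_dvd {f : Polynomial ℤ} {n : ℕ} (hn : 0 < n) {z : ℂ} (hz : IsPrimitiveRoot z n)
    (hroot : aeval z f = 0) : cyclotomic n ℤ ∣ f := by
  have h1 : cyclotomic n ℚ = minpoly ℚ z := cyclotomic_eq_minpoly_rat hz hn
  have h2 : minpoly ℚ z ∣ f.map (algebraMap ℤ ℚ) :=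
    minpoly.dvd ℚ z (by rwa [aeval_map_algebraMap])
  rw [← h1, ← map_cyclotomic_int n ℚ] at h2
  exact (map_dvd_map (algebraMap ℤ ℚ) (fun a b h => by exact_mod_cast h)
    (cyclotomic.monic n ℤ)).mp h2

lemma kenyon_dvd {b : ℕ} (hb : 2 ≤ b) {D : Finset ℕ} (hK : Kenyon b D) {m : ℕ} (hm : 1 ≤ m) :
    ∃ k : ℕ, 1 ≤ k ∧ cyclotomic (b ^ k / Nat.gcd m (b ^ k)) ℤ ∣ mask D := by
  obtain ⟨k, hk, hroot⟩ := hK m hm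
  refine ⟨k, hk, ?_⟩
  set g := Nat.gcd m (b ^ k) with hgdef
  set n := b ^ k / g with hndef
  have hbk : 0 < b ^ k := Nat.pow_pos (by omega)
  have hgpos : 0 < g := Nat.gcd_pos_of_pos_left _ hm
  have hgdvd : g ∣ b ^ k := Nat.gcd_dvd_right _ _
  have hgdvdm : g ∣ m := Nat.gcd_dvd_left _ _
  have hn : 0 < n := Nat.div_pos (Nat.le_of_dvd hbk hgdvd) hgpos
  have hcop : Nat.Coprime (m / g) n := Nat.coprime_div_gcd_div_gcd hgpos
  have hz : IsPrimitiveRoot (Complex.exp (2 * Real.pi * Complex.I * ((m / g : ℕ) / (n : ℂ)))) n :=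
    Complex.isPrimitiveRoot_exp_of_coprime _ n hn.ne' hcop
  have hnat : (m / g) * b ^ k = m * n := by
    obtain ⟨u, hu⟩ := hgdvdm
    obtain ⟨v, hv⟩ := hgdvd
    have hmu : m / g = u := by rw [hu, Nat.mul_div_cancel_left _ hgpos]
    have hnv : n = v := by rw [hndef, hv, Nat.mul_div_cancel_left _ hgpos]
    rw [hmu, hnv, hu, hv]; ring
  have hcast : 2 * (Real.pi : ℂ) * Complex.I * ((m / g : ℕ) / (n : ℂ)) =
      2 * Real.pi * Complex.I * (m : ℂ) / (b : ℂ) ^ k := by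
    have hbkC : ((b : ℂ)) ^ k ≠ 0 := by
      have : (b : ℂ) ≠ 0 := by exact_mod_cast (by omega : b ≠ 0)
      exact pow_ne_zero _ this
    have hnC : (n : ℂ) ≠ 0 := by exact_mod_cast hn.ne'
    have hC : ((m / g : ℕ) : ℂ) * (b : ℂ) ^ k = (m : ℂ) * (n : ℂ) := by
      exact_mod_cast hnat
    rw [mul_div_assoc]
    congr 1
    rw [div_eq_div_iff hnC hbkC]
    exact hC
  rw [hcast] at hz
  exact root_dvd hn hz hroot

lemma cyclotomic_coprime_rat {n₁ n₂ : ℕ} (h1 : 0 < n₁) (h2 : 0 < n₂) (hne : n₁ ≠ n₂) :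
    IsCoprime (cyclotomic n₁ ℚ) (cyclotomic n₂ ℚ) := by
  refine (cyclotomic.irreducible_rat h1).coprime_iff_not_dvd.mpr ?_
  intro hdvd
  have hass := (cyclotomic.irreducible_rat h1).associated_of_dvd (cyclotomic.irreducible_rat h2) hdvd
  have heq := Polynomial.eq_of_monic_of_associated (cyclotomic.monic _ _) (cyclotomic.monic _ _) hass
  exact hne (cyclotomic_injective heq)

lemma prod_cyclotomic_dvd {P : Polynomial ℤ} (T : Finset ℕ)
    (hpos : ∀ n ∈ T, 0 < n) (hdvd : ∀ n ∈ T, cyclotomic n ℤ ∣ P) :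
    ∏ n ∈ T, cyclotomic n ℤ ∣ P := by
  have hQ : ∏ n ∈ T, cyclotomic n ℚ ∣ P.map (algebraMap ℤ ℚ) := by
    apply Finset.prod_dvd_of_coprime
    · intro i hi j hj hij
      exact cyclotomic_coprime_rat (hpos i hi) (hpos j hj) hij
    · intro i hi
      rw [← map_cyclotomic_int i ℚ]
      exact Polynomial.map_dvd _ (hdvd i hi)
  rw [show ∏ n ∈ T, cyclotomic n ℚ = (∏ n ∈ T, cyclotomic n ℤ).map (algebraMap ℤ ℚ) by
    rw [Polynomial.map_prod]; exact Finset.prod_congr rfl fun n _ => (map_cyclotomic_int n ℚ).symm]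
    at hQ
  exact (map_dvd_map (algebraMap ℤ ℚ) (fun a b h => by exact_mod_cast h)
    (monic_prod_of_monic _ _ fun n _ => cyclotomic.monic n ℤ)).mp hQ

lemma card_le_factorization {b p : ℕ} (hp : p.Prime) (hb : 2 ≤ b) {D : Finset ℕ}
    (hcard : D.card = b) (T : Finset ℕ)
    (hT : ∀ a ∈ T, 1 ≤ a ∧ cyclotomic (p ^ a) ℤ ∣ mask D) :
    T.card ≤ b.factorization p := by
  haveI : Fact p.Prime := ⟨hp⟩
  have hprod : ∏ a ∈ T, cyclotomic (p ^ a) ℤ ∣ mask D := by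
    have := prod_cyclotomic_dvd (P := mask D) (T.image (p ^ ·))
      (fun n hn => by
        obtain ⟨a, ha, rfl⟩ := Finset.mem_image.mp hn
        exact pow_pos hp.pos a)
      (fun n hn => by
        obtain ⟨a, ha, rfl⟩ := Finset.mem_image.mp hn
        exact (hT a ha).2)
    rwa [Finset.prod_image (fun a _ a' _ h => Nat.pow_right_injective hp.two_le h)] at this
  have heval : (∏ a ∈ T, cyclotomic (p ^ a) ℤ).eval 1 ∣ (mask D).eval 1 := by
    obtain ⟨Q, hQ⟩ := hprod
    exact ⟨Q.eval 1, by rw [hQ, eval_mul]⟩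
  rw [eval_prod] at heval
  have hone : ∀ a ∈ T, (cyclotomic (p ^ a) ℤ).eval 1 = (p : ℤ) := by
    intro a ha
    have h1 := (hT a ha).1
    obtain ⟨a', rfl⟩ : ∃ a', a = a' + 1 := ⟨a - 1, by omega⟩
    exact eval_one_cyclotomic_prime_pow a'
  rw [Finset.prod_congr rfl hone, Finset.prod_const, mask_eval_one, hcard] at heval
  have hdvdb : p ^ T.card ∣ b := by exact_mod_cast heval
  exact (Nat.Prime.pow_dvd_iff_le_factorization hp (by omega)).mp hdvdb

lemma exists_good_a {b : ℕ} (hb : 2 ≤ b) {D : Finset ℕ} (hcard : D.card = b) (hKen : Kenyon b D)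
    {p : ℕ} (hp : p.Prime) (hpb : p ∣ b) {ℓ : ℕ} (hℓ : ℓ < b.factorization p) :
    ∃ a : ℕ, 1 ≤ a ∧ a % b.factorization p = ℓ ∧ cyclotomic (p ^ a) ℤ ∣ mask D := by
  have hb0 : b ≠ 0 := by omega
  set α := b.factorization p with hα
  have hα1 : 0 < α := hp.factorization_pos_of_dvd hb0 hpb
  set s : ℕ := if ℓ = 0 then α else ℓ with hs
  have hs1 : 1 ≤ s := by rw [hs]; split <;> omega
  have hsα : s ≤ α := by rw [hs]; split <;> omega
  have hsl : s % α = ℓ := by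
    rw [hs]; split
    · rw [Nat.mod_self]; omega
    · exact Nat.mod_eq_of_lt hℓ
  set c := b / p ^ α with hc
  have hpc : ¬ p ∣ c := Nat.not_dvd_ordCompl hp hb0
  have hcpos : 0 < c := Nat.ordCompl_pos p hb0
  have hbfac : p ^ α * c = b := Nat.ordProj_mul_ordCompl_eq_self b p
  have hDne : mask D ≠ 0 := mask_ne_zero (Finset.card_pos.mp (by omega))
  set dP := (mask D).natDegree with hdP
  set K := dP + 1 with hKdef
  set m := p ^ (α - s) * c ^ K with hm
  have hm1 : 1 ≤ m := Nat.mul_pos (pow_pos hp.pos _) (pow_pos hcpos _)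
  obtain ⟨k, hk1, hdvd⟩ := kenyon_dvd hb hKen hm1
  set a := α * (k - 1) + s with ha
  have ha1 : 1 ≤ a := by omega
  have hαk : α * k = (α - s) + a := by
    have h1 : α * k = α * (k - 1) + α := by
      rw [← Nat.mul_succ]; congr 1; omega
    omega
  have hbk : b ^ k = p ^ (α - s) * (p ^ a * c ^ k) := by
    rw [← hbfac, mul_pow, ← pow_mul, hαk, pow_add]; ring
  set w := Nat.gcd (c ^ K) (c ^ k) with hw
  have hwpos : 0 < w := Nat.gcd_pos_of_pos_left _ (pow_pos hcpos _)
  have hwdvd : w ∣ c ^ k := Nat.gcd_dvd_right _ _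
  obtain ⟨v, hv⟩ := hwdvd
  have hvpos : 0 < v := by
    rcases Nat.eq_zero_or_pos v with h | h
    · exfalso; rw [h, mul_zero] at hv; exact (pow_pos hcpos k).ne' hv
    · exact h
  have hcop : Nat.Coprime (p ^ a) (c ^ K) :=
    ((Nat.Prime.coprime_iff_not_dvd hp).mpr hpc).pow a K
  have hg : Nat.gcd m (b ^ k) = p ^ (α - s) * w := by
    rw [hm, hbk, Nat.gcd_mul_left]
    congr 1
    exact Nat.Coprime.gcd_mul_left_cancel_right _ hcop
  have hn : b ^ k / Nat.gcd m (b ^ k) = p ^ a * v := by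
    rw [hg, hbk, hv]
    rw [show p ^ (α - s) * (p ^ a * (w * v)) = (p ^ (α - s) * w) * (p ^ a * v) by ring]
    exact Nat.mul_div_cancel_left _ (Nat.mul_pos (pow_pos hp.pos _) hwpos)
  rw [hn] at hdvd
  have hkK : k ≤ K := by
    by_contra hgt
    push_neg at hgt
    have hk' : k - 1 ≤ α * (k - 1) := Nat.le_mul_of_pos_left _ hα1
    have hak : k ≤ a := by omega
    have hpan : p ^ a ∣ p ^ a * v := Dvd.intro v rfl
    have hnpos : 0 < p ^ a * v := Nat.mul_pos (pow_pos hp.pos _) hvpos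
    have h1 : (cyclotomic (p ^ a * v) ℤ).natDegree ≤ dP := natDegree_le_of_dvd hdvd hDne
    rw [natDegree_cyclotomic] at h1
    have h2 : (p ^ a).totient ∣ (p ^ a * v).totient := Nat.totient_dvd_of_dvd hpan
    have h3 : (p ^ a).totient ≤ (p ^ a * v).totient :=
      Nat.le_of_dvd (Nat.totient_pos.mpr hnpos) h2
    have h4 : a ≤ (p ^ a).totient := by
      rw [Nat.totient_prime_pow hp ha1]
      have h5 : 2 ^ (a - 1) ≤ p ^ (a - 1) := Nat.pow_le_pow_left hp.two_le _
      have h6 : a - 1 < 2 ^ (a - 1) := Nat.lt_two_pow_self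
      have h7 : 1 ≤ p - 1 := by have := hp.two_le; omega
      calc a ≤ 2 ^ (a - 1) := by omega
        _ ≤ p ^ (a - 1) := h5
        _ ≤ p ^ (a - 1) * (p - 1) := Nat.le_mul_of_pos_right _ (by omega)
    omega
  have hwck : w = c ^ k := by
    rw [hw]
    exact Nat.gcd_eq_right (pow_dvd_pow c hkK)
  have hv1 : v = 1 := by
    have h := hv
    rw [hwck] at h
    have h2 : c ^ k * v = c ^ k * 1 := by rw [mul_one]; exact h.symm
    exact Nat.eq_of_mul_eq_mul_left (pow_pos hcpos k) h2
  rw [hv1, mul_one] at hdvd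
  refine ⟨a, ha1, ?_, hdvd⟩
  rw [ha, add_comm, Nat.add_mul_mod_self_left, hsl]

/-- For each prime `p ∣ b` with multiplicity `α_p = b.factorization p` and each residue
`ℓ < α_p`, there is a unique `a ≥ 1` with `a ≡ ℓ (mod α_p)` and `Φ_{p^a} ∣ P_D`; moreover the
prime-power spectrum of `D` consists exactly of such prime powers `p^a` with `p ∣ b`. -/
theorem stmt1 (b : ℕ) (hb : 2 ≤ b) (D : Finset ℕ) (hcard : D.card = b) (hK : Kenyon b D) :
    (∀ p : ℕ, p.Prime → p ∣ b → ∀ ℓ : ℕ, ℓ < b.factorization p →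
      ∃! a : ℕ, 1 ≤ a ∧ a % b.factorization p = ℓ ∧ cyclotomic (p ^ a) ℤ ∣ mask D) ∧
    (∀ q a : ℕ, q.Prime → 1 ≤ a → cyclotomic (q ^ a) ℤ ∣ mask D → q ∣ b) := by
  constructor
  · intro p hp hpb ℓ hℓ
    classical
    obtain ⟨a, ha⟩ := exists_good_a hb hcard hK hp hpb hℓ
    refine ⟨a, ha, ?_⟩
    intro a' ha'
    by_contra hne
    set α := b.factorization p with hα
    have hex : ∀ ℓ' : ℕ, ∃ x : ℕ, ℓ' < α →
        (1 ≤ x ∧ x % α = ℓ' ∧ cyclotomic (p ^ x) ℤ ∣ mask D) := by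
      intro ℓ'
      by_cases h : ℓ' < α
      · obtain ⟨x, hx⟩ := exists_good_a hb hcard hK hp hpb h
        exact ⟨x, fun _ => hx⟩
      · exact ⟨1, fun h' => absurd h' h⟩
    choose f hf using hex
    set T : Finset ℕ := ((Finset.range α).erase ℓ).image f ∪ {a, a'} with hT
    have hmemT : ∀ x ∈ T, 1 ≤ x ∧ cyclotomic (p ^ x) ℤ ∣ mask D := by
      intro x hx
      rw [hT, Finset.mem_union] at hx
      rcases hx with hx | hx
      · obtain ⟨ℓ', hℓ', rfl⟩ := Finset.mem_image.mp hx
        have hlt : ℓ' < α := Finset.mem_range.mp (Finset.mem_of_mem_erase hℓ')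
        exact ⟨(hf ℓ' hlt).1, (hf ℓ' hlt).2.2⟩
      · simp only [Finset.mem_insert, Finset.mem_singleton] at hx
        rcases hx with rfl | rfl
        · exact ⟨ha.1, ha.2.2⟩
        · exact ⟨ha'.1, ha'.2.2⟩
    have hcardT : T.card = α + 1 := by
      have hdisj : Disjoint (((Finset.range α).erase ℓ).image f) ({a, a'} : Finset ℕ) := by
        rw [Finset.disjoint_right]
        intro x hx hx'
        obtain ⟨ℓ', hℓ', rfl⟩ := Finset.mem_image.mp hx'
        have hℓ'ne : ℓ' ≠ ℓ := Finset.ne_of_mem_erase hℓ'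
        have hlt : ℓ' < α := Finset.mem_range.mp (Finset.mem_of_mem_erase hℓ')
        have hmod : f ℓ' % α = ℓ' := (hf ℓ' hlt).2.1
        simp only [Finset.mem_insert, Finset.mem_singleton] at hx
        rcases hx with h | h
        · rw [h, ha.2.1] at hmod; exact hℓ'ne hmod.symm
        · rw [h, ha'.2.1] at hmod; exact hℓ'ne hmod.symm
      rw [hT, Finset.card_union_of_disjoint hdisj]
      have h1 : (((Finset.range α).erase ℓ).image f).card = α - 1 := by
        rw [Finset.card_image_of_injOn, Finset.card_erase_of_mem (Finset.mem_range.mpr hℓ)]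
        · rw [Finset.card_range]
        · intro x hx y hy hxy
          have hx' : x < α := Finset.mem_range.mp (Finset.mem_of_mem_erase hx)
          have hy' : y < α := Finset.mem_range.mp (Finset.mem_of_mem_erase hy)
          rw [← (hf x hx').2.1, ← (hf y hy').2.1, hxy]
      have h2 : ({a, a'} : Finset ℕ).card = 2 := Finset.card_pair (fun h => hne h.symm)
      have hα1 : 0 < α := hp.factorization_pos_of_dvd (by omega) hpb
      rw [h1, h2]
      omega
    have := card_le_factorization hp hb hcard T hmemT
    rw [hcardT] at this
    omega
  · intro q a hq ha hdvd
    haveI : Fact q.Prime := ⟨hq⟩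
    obtain ⟨Q, hQ⟩ := hdvd
    have heval : (D.card : ℤ) = (cyclotomic (q ^ a) ℤ).eval 1 * Q.eval 1 := by
      rw [← eval_mul, ← hQ, mask_eval_one]
    obtain ⟨a', rfl⟩ : ∃ a', a = a' + 1 := ⟨a - 1, by omega⟩
    rw [eval_one_cyclotomic_prime_pow] at heval
    have : (q : ℤ) ∣ (b : ℤ) := ⟨Q.eval 1, by rw [← hcard]; exact heval⟩
    exact_mod_cast this
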